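/- Fix an integer N ≥ 1 and let S and β_k be as defined in the context. Let k ≥ 1 be an index with k ≡ 1 (mod N). Then every element x of S lying in the interval [β_k/(N+1), β_k) has fractional part x − ⌊x⌋ at least 1/N; in particular the fractional part of x does not lie in Q_0 = [0, 1/N). -/

import Mathlib

open MeasureTheory

noncomputable section

/-- The geometric sums `β_k = Σ_{j=0}^{k-1} (N+1)^j`. -/
def beta (N k : ℕ) : ℕ := ∑ j ∈ Finset.range k, (N + 1) ^ j

/-- The deleted intervals `Q_i = [i/N, (i+1)/N)`. -/
def Qset (N i : ℕ) : Set ℝ := Set.Ico ((i : ℝ) / N) (((i : ℝ) + 1) / N)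

/-- `R_i = [0,1) \ Q_i`. -/
def Rset (N i : ℕ) : Set ℝ := Set.Ico (0 : ℝ) 1 \ Qset N i

/-- For `m ≥ 0`, the unique `k` with `β_k ≤ m < β_{k+1}`. -/
def kIdx (N m : ℕ) : ℕ := Nat.findGreatest (fun k => beta N k ≤ m) m

/-- `S_m` for nonnegative `m` : `S_0 = R_0`, and `S_m = m + R_{(k mod N)}` for `m > 0`. -/
def Spos (N m : ℕ) : Set ℝ :=
  if m = 0 then Rset N 0 else (fun x => x + (m : ℝ)) '' Rset N (kIdx N m % N)

/-- `S_m` for all integers `m`: for `m < 0`, `S_m = 2m + S_{|m|}`. -/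
def Sm (N : ℕ) (m : ℤ) : Set ℝ :=
  if 0 ≤ m then Spos N m.toNat else (fun x => x + 2 * (m : ℝ)) '' Spos N m.natAbs

/-- The set `S = ⋃_{m ∈ ℤ} S_m`. -/
def SetS (N : ℕ) : Set ℝ := ⋃ m : ℤ, Sm N m

lemma beta_succ' (N c : ℕ) : beta N (c+1) = (N+1) * beta N c + 1 := by
  simp [beta, geom_sum_succ]

lemma beta_mono' (N : ℕ) : Monotone (beta N) := fun a b h =>
  Finset.sum_le_sum_of_subset (Finset.range_subset_range.mpr h)

lemma self_le_beta' (N c : ℕ) : c ≤ beta N c := by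
  calc c = ∑ _j ∈ Finset.range c, 1 := by simp
  _ ≤ _ := Finset.sum_le_sum fun j _ => Nat.one_le_pow _ _ (Nat.succ_pos N)

lemma kIdx_eq' (N m k : ℕ) (h1 : beta N k ≤ m) (h2 : m < beta N (k+1)) :
    kIdx N m = k := by
  rw [kIdx, Nat.findGreatest_eq_iff]
  refine ⟨le_trans (self_le_beta' N k) h1, fun _ => h1, fun n hn _ hb => ?_⟩
  exact absurd (le_trans (beta_mono' N hn) hb) (not_le.mpr h2)

lemma R0_lb (N : ℕ) {r : ℝ} (hr : r ∈ Rset N 0) : 1 / (N : ℝ) ≤ r := by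
  obtain ⟨⟨h0, _⟩, hq⟩ := hr
  by_contra hlt
  exact hq ⟨by simpa using h0, by push_neg at hlt; simpa using hlt⟩

/-- If `k ≥ 1` and `k ≡ 1 (mod N)`, then every element of `S` in `[β_k/(N+1), β_k)`
has fractional part at least `1/N`; in particular its fractional part is not in
`Q_0 = [0, 1/N)`. -/
theorem stmt_12 (N : ℕ) (hN : 1 ≤ N) (k : ℕ) (hk : 1 ≤ k) (hkmod : k % N = 1 % N)
    (x : ℝ) (hx : x ∈ SetS N)
    (hxI : x ∈ Set.Ico ((beta N k : ℝ) / ((N : ℝ) + 1)) ((beta N k : ℝ))) :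
    1 / (N : ℝ) ≤ Int.fract x ∧ Int.fract x ∉ Qset N 0 := by
  have hNpos : (0:ℝ) < (N:ℝ) + 1 := by positivity
  have hbk1 : 1 ≤ beta N k := le_trans (by simp [beta]) (beta_mono' N hk)
  have hx_pos : 0 < x := by
    have h1 : (1:ℝ) ≤ (beta N k : ℝ) := by exact_mod_cast hbk1
    have h2 : (1:ℝ)/((N:ℝ)+1) ≤ (beta N k : ℝ)/((N:ℝ)+1) := by gcongr
    exact lt_of_lt_of_le (by positivity) (h2.trans hxI.1)
  -- main claim: the fractional part bound
  have main : 1 / (N : ℝ) ≤ Int.fract x := by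
    obtain ⟨m, hm⟩ := Set.mem_iUnion.mp hx
    rw [Sm] at hm
    by_cases h0m : 0 ≤ m
    · rw [if_pos h0m] at hm
      rw [Spos] at hm
      by_cases hm0 : m.toNat = 0
      · rw [if_pos hm0] at hm
        have h01 : x ∈ Set.Ico (0:ℝ) 1 := hm.1
        have : Int.fract x = x := Int.fract_eq_self.mpr ⟨h01.1, h01.2⟩
        rw [this]; exact R0_lb N hm
      · rw [if_neg hm0] at hm
        obtain ⟨r, hr, rfl⟩ := hm
        set m0 := m.toNat with hm0def
        dsimp only at hxI hx_pos
        have hr01 : r ∈ Set.Ico (0:ℝ) 1 := hr.1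
        have hfr : Int.fract (r + (m0:ℝ)) = r := by
          rw [Int.fract_add_natCast, Int.fract_eq_self.mpr ⟨hr01.1, hr01.2⟩]
        -- nat bounds on m0
        have hub : m0 < beta N k := by
          have : (m0 : ℝ) < (beta N k : ℝ) :=
            lt_of_le_of_lt (by linarith [hr01.1]) hxI.2
          exact_mod_cast this
        have hlb : beta N k < (m0 + 1) * (N + 1) := by
          have h1 : (beta N k : ℝ) ≤ (r + m0) * ((N:ℝ)+1) :=
            (div_le_iff₀ hNpos).mp hxI.1
          have h2 : (r + (m0:ℝ)) * ((N:ℝ)+1) < ((m0:ℝ)+1) * ((N:ℝ)+1) := by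
            apply mul_lt_mul_of_pos_right _ hNpos
            linarith [hr01.2]
          have : (beta N k : ℝ) < ((m0:ℝ)+1) * ((N:ℝ)+1) := lt_of_le_of_lt h1 h2
          exact_mod_cast this
        -- so beta N (k-1) ≤ m0 < beta N k
        obtain ⟨c, rfl⟩ : ∃ c, k = c + 1 := ⟨k - 1, by omega⟩
        have hbsucc := beta_succ' N c
        have hc_le : beta N c ≤ m0 := by
          have : (N+1) * beta N c + 1 < (m0+1)*(N+1) := by rw [← hbsucc]; exact hlb
          nlinarith
        have hidx : kIdx N m0 = c := kIdx_eq' N m0 c hc_le hub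
        have hcmod : c % N = 0 := by
          have hd : N ∣ c := by simpa using (Nat.modEq_iff_dvd' hk).mp hkmod.symm
          obtain ⟨q, rfl⟩ := hd
          exact Nat.mul_mod_right N q
        rw [hfr]
        have : r ∈ Rset N 0 := by
          rw [hidx, hcmod] at hr; exact hr
        exact R0_lb N this
    · rw [if_neg h0m] at hm
      exfalso
      obtain ⟨y, hy, rfl⟩ := hm
      rw [Spos, if_neg (by omega : m.natAbs ≠ 0)] at hy
      obtain ⟨r, hr, rfl⟩ := hy
      dsimp only at hx_pos
      have hr1 : r < 1 := hr.1.2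
      have hcast : (m.natAbs : ℝ) = -(m : ℝ) := by
        push_cast [Nat.cast_natAbs]
        rw [abs_of_neg (by exact_mod_cast not_le.mp h0m : (m:ℝ) < 0)]
      have : r + (m.natAbs : ℝ) + 2 * (m:ℝ) = r + (m:ℝ) := by rw [hcast]; ring
      rw [this] at hx_pos
      have hmle : (m : ℝ) ≤ -1 := by exact_mod_cast (by omega : m ≤ -1)
      linarith
  refine ⟨main, fun hq => ?_⟩
  have := hq.2
  simp only [Nat.cast_zero, zero_add, zero_div] at this
  linarith
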